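/- Let k be a perfect field of characteristic p and A a smooth k-algebra with a chosen lift (Ã, φ) where Ã is a flat W₂(k)-lift of A and φ lifts the Frobenius compatibly with the Witt Frobenius on W₂(k). Then the map δ : A → F_*A/A defined by δ(x̄) = class of (φ(x̃) - x̃^p)/p (for any lift x̃ of x̄) is well defined, and x ↦ (x, δ(x)) defines a ring homomorphism A → W₂(A)/p splitting the projection W₂(A)/p → A. -/

import Mathlib

universe u

open WittVector Finset TensorProduct

section AuxWitt

variable {p : ℕ} [hp : Fact p.Prime]

private lemma ghost1_eq {R : Type*} [CommRing R] (x : WittVector p R) :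
    ghostComponent 1 x = x.coeff 0 ^ p + p * x.coeff 1 := by
  rw [ghostComponent_apply, aeval_wittPolynomial]
  simp [Finset.sum_range_succ]

private lemma add_coeff_one_aux {R : Type*} [CommRing R] [Algebra ℚ R]
    (x y : WittVector p R) :
    (x + y).coeff 1 = x.coeff 1 + y.coeff 1
      - ∑ i ∈ Finset.Ioo 0 p, x.coeff 0 ^ i * y.coeff 0 ^ (p - i) * (p.choose i / p : ℕ) := by
  have hpu : IsUnit (p : R) := by
    have h := (IsUnit.mk0 (p : ℚ) (by exact_mod_cast hp.out.ne_zero)).map (algebraMap ℚ R)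
    rwa [map_natCast] at h
  have key : ∀ z : WittVector p R, (p : R) * z.coeff 1 = ghostComponent 1 z - z.coeff 0 ^ p := by
    intro z; rw [ghost1_eq]; ring
  apply hpu.mul_left_cancel
  rw [key, map_add, ghost1_eq, ghost1_eq, add_coeff_zero, add_pow_prime_eq' hp.out]
  ring

private lemma add_coeff_one {R : Type*} [CommRing R] (x y : WittVector p R) :
    (x + y).coeff 1 = x.coeff 1 + y.coeff 1
      - ∑ i ∈ Finset.Ioo 0 p, x.coeff 0 ^ i * y.coeff 0 ^ (p - i) * (p.choose i / p : ℕ) := by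
  classical
  set S := MvPolynomial (ℕ ⊕ ℕ) ℤ
  set xU : WittVector p S := WittVector.mk p fun n => MvPolynomial.X (Sum.inl n) with hxU
  set yU : WittVector p S := WittVector.mk p fun n => MvPolynomial.X (Sum.inr n) with hyU
  have huniv : (xU + yU).coeff 1 = xU.coeff 1 + yU.coeff 1
      - ∑ i ∈ Finset.Ioo 0 p, xU.coeff 0 ^ i * yU.coeff 0 ^ (p - i) * (p.choose i / p : ℕ) := by
    apply MvPolynomial.map_injective (Int.castRingHom ℚ) Int.cast_injective
    have hmc : ∀ z : WittVector p S, (MvPolynomial.map (Int.castRingHom ℚ)) (z.coeff 1)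
        = (WittVector.map (MvPolynomial.map (Int.castRingHom ℚ)) z).coeff 1 :=
      fun z => (WittVector.map_coeff _ _ _).symm
    rw [hmc, map_add (WittVector.map _)]
    rw [add_coeff_one_aux]
    simp only [map_sub, map_add, map_sum, map_mul, map_pow, map_natCast,
      WittVector.map_coeff]
  set g : S →+* R := MvPolynomial.eval₂Hom (Int.castRingHom R) (Sum.elim x.coeff y.coeff) with hg
  have hgx : WittVector.map g xU = x := by
    ext n
    rw [WittVector.map_coeff, hxU, WittVector.coeff_mk]
    exact MvPolynomial.eval₂Hom_X' _ _ _
  have hgy : WittVector.map g yU = y := by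
    ext n
    rw [WittVector.map_coeff, hyU, WittVector.coeff_mk]
    exact MvPolynomial.eval₂Hom_X' _ _ _
  have : (x + y).coeff 1 = g ((xU + yU).coeff 1) := by
    rw [← WittVector.map_coeff, map_add (WittVector.map g), hgx, hgy]
  rw [this, huniv]
  simp only [map_sub, map_add, map_sum, map_mul, map_pow, map_natCast, WittVector.map_coeff]
  rw [← WittVector.map_coeff g, ← WittVector.map_coeff g, ← WittVector.map_coeff g,
    ← WittVector.map_coeff g, hgx, hgy]

section Trunc
variable {R : Type*} [CommRing R]

private noncomputable def Tch (a : R) : TruncatedWittVector p 2 R :=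
  WittVector.truncate 2 (WittVector.teichmuller p a)

private noncomputable def Vsh (b : R) : TruncatedWittVector p 2 R :=
  WittVector.truncate 2 (WittVector.verschiebung (WittVector.teichmuller p b))

private lemma trV (u : WittVector p R) :
    WittVector.truncate 2 (verschiebung u) = (Vsh (u.coeff 0) : TruncatedWittVector p 2 R) := by
  ext i
  fin_cases i <;>
    simp [Vsh, WittVector.coeff_truncate, verschiebung_coeff_zero,
      verschiebung_coeff_succ, teichmuller_coeff_zero]

private lemma Vsh_coeff_zero (b : R) : (Vsh (p := p) b).coeff 0 = 0 := by
  simp [Vsh, WittVector.coeff_truncate, verschiebung_coeff_zero]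

private lemma Vsh_coeff_one (b : R) : (Vsh (p := p) b).coeff 1 = b := by
  show (WittVector.truncate 2 (verschiebung (teichmuller p b))).coeff 1 = b
  rw [WittVector.coeff_truncate]
  show (verschiebung (teichmuller p b)).coeff (0 + 1) = b
  rw [verschiebung_coeff_add_one, teichmuller_coeff_zero]

private lemma mkEq (a b : R) :
    Tch (p := p) a + Vsh b = TruncatedWittVector.mk p ![a, b] := by
  have h0 : ((teichmuller p a : WittVector p R) + verschiebung (teichmuller p b)).coeff 0 = a := by
    rw [add_coeff_zero, verschiebung_coeff_zero, teichmuller_coeff_zero, add_zero]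
  have h1 : ((teichmuller p a : WittVector p R) + verschiebung (teichmuller p b)).coeff 1 = b := by
    rw [add_coeff_one]
    rw [teichmuller_coeff_pos p a 1 one_pos, verschiebung_coeff_zero]
    have : ∀ i ∈ Finset.Ioo 0 p,
        (teichmuller p a : WittVector p R).coeff 0 ^ i * (0:R) ^ (p - i) * (p.choose i / p : ℕ) = 0 := by
      intro i hi
      rw [mem_Ioo] at hi
      rw [zero_pow (by omega), mul_zero, zero_mul]
    rw [Finset.sum_congr rfl this, Finset.sum_const_zero]
    show (0 : R) + (verschiebung (teichmuller p b)).coeff (0+1) - 0 = b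
    rw [verschiebung_coeff_add_one, teichmuller_coeff_zero]
    ring
  have : Tch (p := p) a + Vsh b
      = WittVector.truncate 2 ((teichmuller p a : WittVector p R) + verschiebung (teichmuller p b)) := by
    rw [map_add]; rfl
  rw [this]
  ext i
  fin_cases i
  · rw [WittVector.coeff_truncate, TruncatedWittVector.coeff_mk]; exact h0
  · rw [WittVector.coeff_truncate, TruncatedWittVector.coeff_mk]; exact h1

private lemma Vsh_add (b c : R) : Vsh (p := p) b + Vsh c = Vsh (b + c) := by
  have : Vsh (p := p) b + Vsh c
      = WittVector.truncate 2 (verschiebung ((teichmuller p b : WittVector p R) + teichmuller p c)) := by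
    rw [map_add (verschiebung), map_add]; rfl
  rw [this, trV, add_coeff_zero, teichmuller_coeff_zero, teichmuller_coeff_zero]

private lemma Vsh_zero : Vsh (p := p) (0 : R) = 0 := by
  simp [Vsh, teichmuller_zero]

private lemma Vsh_sub (b c : R) : Vsh (p := p) b - Vsh c = Vsh (b - c) := by
  have h := Vsh_add (p := p) (b - c) c
  rw [sub_add_cancel] at h
  rw [← h]; ring

private lemma Tch_mul (a c : R) : Tch (p := p) a * Tch c = Tch (a * c) := by
  simp only [Tch, ← map_mul]

private lemma Tch_one : Tch (p := p) (1 : R) = 1 := by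
  simp [Tch, map_one]

private lemma Tch_zero : Tch (p := p) (0 : R) = 0 := by
  simp [Tch, teichmuller_zero]

private lemma Tch_add (a c : R) : Tch (p := p) a + Tch c
    = Tch (a + c) + Vsh (- ∑ i ∈ Finset.Ioo 0 p, a ^ i * c ^ (p - i) * (p.choose i / p : ℕ)) := by
  rw [mkEq]
  have : Tch (p := p) a + Tch c
      = WittVector.truncate 2 ((teichmuller p a : WittVector p R) + teichmuller p c) := by
    rw [map_add]; rfl
  rw [this]
  ext i
  fin_cases i
  · rw [WittVector.coeff_truncate, TruncatedWittVector.coeff_mk]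
    show _ = a + c
    rw [add_coeff_zero, teichmuller_coeff_zero, teichmuller_coeff_zero]
  · rw [WittVector.coeff_truncate, TruncatedWittVector.coeff_mk]
    show ((teichmuller p a : WittVector p R) + teichmuller p c).coeff 1 = _
    rw [add_coeff_one, teichmuller_coeff_pos p a 1 one_pos, teichmuller_coeff_pos p c 1 one_pos,
      teichmuller_coeff_zero, teichmuller_coeff_zero]
    simp only [Fin.mk_one, Matrix.cons_val_one, Matrix.head_cons, Matrix.cons_val_zero]
    ring

variable [CharP R p]

private lemma Vsh_mul_Tch (b a : R) : Vsh (p := p) b * Tch a = Vsh (b * a ^ p) := by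
  have : Vsh (p := p) b * Tch a
      = WittVector.truncate 2 (verschiebung ((teichmuller p b : WittVector p R) * frobenius (teichmuller p a))) := by
    rw [verschiebung_mul_frobenius, map_mul]; rfl
  rw [this, trV, mul_coeff_zero, coeff_frobenius_charP, teichmuller_coeff_zero, teichmuller_coeff_zero]

private lemma Vsh_mul_Vsh (b c : R) : Vsh (p := p) b * Vsh c = 0 := by
  have : Vsh (p := p) b * Vsh c
      = WittVector.truncate 2 (verschiebung ((teichmuller p b : WittVector p R)
          * frobenius (verschiebung (teichmuller p c)))) := by
    rw [verschiebung_mul_frobenius, map_mul]; rfl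
  rw [this, trV, mul_coeff_zero, frobenius_verschiebung, mul_charP_coeff_zero, mul_zero, Vsh_zero]

private lemma trunc_mul_p (w : WittVector p R) :
    WittVector.truncate 2 (w * (p : WittVector p R)) = Vsh (w.coeff 0 ^ p) := by
  rw [← verschiebung_frobenius, trV, coeff_frobenius_charP]

private lemma p_mul_Tch (a : R) : (p : TruncatedWittVector p 2 R) * Tch a = Vsh (a ^ p) := by
  have : (p : TruncatedWittVector p 2 R) = WittVector.truncate 2 (p : WittVector p R) := by
    rw [map_natCast]
  rw [this, Tch, ← map_mul, mul_comm, trunc_mul_p, teichmuller_coeff_zero]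

private lemma mem_span_p {z : TruncatedWittVector p 2 R}
    (hz : z ∈ Ideal.span {(p : TruncatedWittVector p 2 R)}) :
    ∃ c : R, z = Vsh (c ^ p) := by
  rw [Ideal.mem_span_singleton] at hz
  obtain ⟨v, rfl⟩ := hz
  obtain ⟨w, rfl⟩ := WittVector.truncate_surjective p 2 R v
  refine ⟨w.coeff 0, ?_⟩
  have : (p : TruncatedWittVector p 2 R) = WittVector.truncate 2 (p : WittVector p R) := by
    rw [map_natCast]
  rw [this, ← map_mul, mul_comm, trunc_mul_p]

private lemma Vsh_pow_mem (c : R) :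
    (Vsh (c ^ p) : TruncatedWittVector p 2 R) ∈ Ideal.span {(p : TruncatedWittVector p 2 R)} := by
  rw [← p_mul_Tch, Ideal.mem_span_singleton]
  exact ⟨Tch c, rfl⟩

end Trunc

private lemma flat_torsion {R M : Type*} [CommRing R] [CommRing M] [Algebra R M]
    [Module.Flat R M] (r : R) (hr : ∀ u : R, r * u = 0 → ∃ t, u = r * t)
    (hr2 : r * r = 0)
    (z : M) (hz : algebraMap R M r * z = 0) : ∃ t : M, z = algebraMap R M r * t := by
  have hz' : r • z = 0 := by rwa [Algebra.smul_def]
  set f : R →ₗ[R] R := LinearMap.lsmul R R r with hf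
  have hex : Function.Exact f f := by
    intro u
    constructor
    · intro hu
      obtain ⟨t, ht⟩ := hr u (by simpa [hf, smul_eq_mul] using hu)
      exact ⟨t, by simp [hf, smul_eq_mul, ht, mul_comm]⟩
    · rintro ⟨x, rfl⟩
      show r • (r • x) = 0
      rw [smul_smul, hr2, zero_smul]
  have hT := Module.Flat.lTensor_exact M hex
  have hcomm : ∀ u : M ⊗[R] R, LinearMap.lTensor M f u = r • u := by
    intro u
    induction u using TensorProduct.induction_on with
    | zero => simp
    | tmul m x => rw [LinearMap.lTensor_tmul, ← TensorProduct.tmul_smul, smul_eq_mul]; simp [hf]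
    | add u v hu hv => rw [map_add, hu, hv, smul_add]
  set e := TensorProduct.rid R M with he
  set u := e.symm z with hu
  have h0 : LinearMap.lTensor M f u = 0 := by
    rw [hcomm]
    apply e.injective
    rw [map_smul, map_zero, hu, LinearEquiv.apply_symm_apply, hz']
  obtain ⟨w, hw⟩ := (hT u).mp h0
  refine ⟨e w, ?_⟩
  rw [← Algebra.smul_def]
  have : z = e u := by rw [hu, LinearEquiv.apply_symm_apply]
  rw [this, ← hw, hcomm, map_smul]

/-- In `W₂(k)` for `k` a perfect field of characteristic `p`: `p * p = 0`. -/
private lemma p_sq_zero (k : Type*) [Field k] [CharP k p] :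
    (p : TruncatedWittVector p 2 k) * (p : TruncatedWittVector p 2 k) = 0 := by
  have h : (p : TruncatedWittVector p 2 k) = WittVector.truncate 2 (p : WittVector p k) := by
    rw [map_natCast]
  rw [h, ← map_mul, ← sq]
  ext i
  fin_cases i
  · rw [WittVector.coeff_truncate]
    show ((p : WittVector p k) ^ 2).coeff 0 = _
    rw [WittVector.coeff_p_pow_eq_zero p k (by norm_num)]
    simp
  · rw [WittVector.coeff_truncate]
    show ((p : WittVector p k) ^ 2).coeff 1 = _
    rw [WittVector.coeff_p_pow_eq_zero p k (by norm_num)]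
    simp

private lemma p_torsion_eq (k : Type*) [Field k] [CharP k p] [PerfectRing k p]
    (u : TruncatedWittVector p 2 k) (hu : (p : TruncatedWittVector p 2 k) * u = 0) :
    ∃ t, u = (p : TruncatedWittVector p 2 k) * t := by
  obtain ⟨w, rfl⟩ := WittVector.truncate_surjective p 2 k u
  have h : (p : TruncatedWittVector p 2 k) = WittVector.truncate 2 (p : WittVector p k) := by
    rw [map_natCast]
  rw [h, ← map_mul, mul_comm, trunc_mul_p] at hu
  have hw1 : w.coeff 0 ^ p = 0 := by
    have := congrArg (fun z => TruncatedWittVector.coeff 1 z) hu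
    simpa [Vsh_coeff_one] using this
  have hw0 : w.coeff 0 = 0 := pow_eq_zero_iff hp.out.ne_zero |>.mp hw1
  obtain ⟨c, hc⟩ := surjective_frobenius k p (w.coeff 1)
  refine ⟨Tch c, ?_⟩
  rw [p_mul_Tch]
  ext i
  fin_cases i
  · rw [WittVector.coeff_truncate]
    show w.coeff 0 = (Vsh (c ^ p)).coeff 0
    rw [hw0, Vsh_coeff_zero]
  · rw [WittVector.coeff_truncate]
    show w.coeff 1 = (Vsh (c ^ p)).coeff 1
    rw [Vsh_coeff_one, ← hc]
    rfl

end AuxWitt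

/-- Let `k` be a perfect field of characteristic `p` and `A` a smooth `k`-algebra with a
chosen lift `(Alift, φ)`, where `Alift` is a flat `W₂(k)`-lift of `A` (given by a surjection
`π : Alift → A` with kernel `(p)`) and `φ` lifts the Frobenius compatibly with the Witt
Frobenius of `W₂(k)` (which, in characteristic `p`, raises each Witt coordinate to the
`p`-th power).  Then the map `δ : A → F_*A/A`, `δ(x̄) = class of (φ(x̃) - x̃^p)/p`, is well
defined and `x ↦ (x, δ(x))` defines a ring homomorphism `A → W₂(A)/p` splitting the
projection `W₂(A)/p → A`. -/
theorem stmt12 (p : ℕ) [Fact p.Prime] (k : Type u) [Field k] [CharP k p] [PerfectRing k p]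
    (A : Type u) [CommRing A] [Algebra k A] (hsmooth : Algebra.Smooth k A)
    (Alift : Type*) [CommRing Alift] [Algebra (TruncatedWittVector p 2 k) Alift]
    [Module.Flat (TruncatedWittVector p 2 k) Alift]
    (π : Alift →+* A) (hsurj : Function.Surjective π)
    (hker : RingHom.ker π = Ideal.span {(p : Alift)})
    (φ : Alift →+* Alift) (hlift : ∀ x : Alift, π (φ x) = (π x) ^ p)
    (hcompat : ∀ c : TruncatedWittVector p 2 k,
      φ (algebraMap (TruncatedWittVector p 2 k) Alift c) =
        algebraMap (TruncatedWittVector p 2 k) Alift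
          (TruncatedWittVector.mk p ![c.coeff 0 ^ p, c.coeff 1 ^ p])) :
    ∃ s : A →+* (TruncatedWittVector p 2 A ⧸
        Ideal.span {(p : TruncatedWittVector p 2 A)}),
      (∀ (a : A) (w : TruncatedWittVector p 2 A),
        s a = Ideal.Quotient.mk (Ideal.span {(p : TruncatedWittVector p 2 A)}) w →
          w.coeff 0 = a) ∧
      (∀ x y : Alift, φ x - x ^ p = (p : Alift) * y →
        s (π x) = Ideal.Quotient.mk (Ideal.span {(p : TruncatedWittVector p 2 A)})
          (TruncatedWittVector.mk p ![π x, π y])) := by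
  classical
  by_cases hA : Subsingleton A
  · haveI : Subsingleton (TruncatedWittVector p 2 A) :=
      ⟨fun a b => TruncatedWittVector.ext fun i => Subsingleton.elim _ _⟩
    haveI : Subsingleton (TruncatedWittVector p 2 A ⧸
        Ideal.span {(p : TruncatedWittVector p 2 A)}) :=
      Function.Surjective.subsingleton Ideal.Quotient.mk_surjective
    refine ⟨{ toFun := fun _ => 0,
              map_one' := Subsingleton.elim _ _,
              map_mul' := fun _ _ => Subsingleton.elim _ _,
              map_zero' := Subsingleton.elim _ _,
              map_add' := fun _ _ => Subsingleton.elim _ _ }, ?_, ?_⟩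
    · intro a w _; exact Subsingleton.elim _ _
    · intro x y _; exact Subsingleton.elim _ _
  haveI : Nontrivial A := not_subsingleton_iff_nontrivial.mp hA
  have hpA : (p : A) = 0 := by
    have h1 : (p : A) = algebraMap k A (p : k) := (map_natCast _ p).symm
    rw [h1, CharP.cast_eq_zero k p, map_zero]
  haveI hchar : CharP A p := by
    have hdvd : ringChar A ∣ p := ringChar.dvd hpA
    rcases (Fact.out : p.Prime).eq_one_or_self_of_dvd _ hdvd with h1 | h1
    · exact absurd h1 CharP.ringChar_ne_one
    · rw [← h1]; exact ringChar.charP A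
  have hppr : p.Prime := Fact.out
  have halg : (p : Alift) = algebraMap (TruncatedWittVector p 2 k) Alift
      (p : TruncatedWittVector p 2 k) := (map_natCast _ p).symm
  have hp2 : (p : Alift) * (p : Alift) = 0 := by
    rw [halg, ← map_mul, p_sq_zero k, map_zero]
  have hπp : π (p : Alift) = 0 := by rw [map_natCast, hpA]
  have hTor : ∀ z : Alift, (p : Alift) * z = 0 → ∃ t, z = (p : Alift) * t := by
    intro z hz
    obtain ⟨t, ht⟩ := flat_torsion (R := TruncatedWittVector p 2 k) (M := Alift)
      (p : TruncatedWittVector p 2 k)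
      (fun u hu => p_torsion_eq k u hu) (p_sq_zero k) z (by rwa [← halg])
    exact ⟨t, by rwa [← halg] at ht⟩
  have hy : ∀ x : Alift, ∃ y, φ x - x ^ p = (p : Alift) * y := by
    intro x
    have hmem : φ x - x ^ p ∈ RingHom.ker π := by
      rw [RingHom.mem_ker, map_sub, map_pow, hlift, sub_self]
    rw [hker, Ideal.mem_span_singleton] at hmem
    exact hmem
  set d : Alift → A := fun x => π (Classical.choose (hy x)) with hdd
  have hd : ∀ x y, φ x - x ^ p = (p : Alift) * y → d x = π y := by
    intro x y h
    have h0 := Classical.choose_spec (hy x)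
    have hzz : (p : Alift) * (Classical.choose (hy x) - y) = 0 := by
      rw [mul_sub, ← h0, ← h]; ring
    obtain ⟨t, ht⟩ := hTor _ hzz
    have h2 := congrArg π ht
    rw [map_sub, map_mul, hπp, zero_mul] at h2
    exact sub_eq_zero.mp h2
  set Λf : Alift → TruncatedWittVector p 2 A := fun x => Tch (π x) + Vsh (d x) with hΛf
  have hΛone : Λf 1 = 1 := by
    have h1 : d 1 = 0 := by rw [hd 1 0 (by simp), map_zero]
    show Tch (π 1) + Vsh (d 1) = 1
    rw [map_one, h1, Tch_one, Vsh_zero, add_zero]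
  have hΛzero : Λf 0 = 0 := by
    have h1 : d 0 = 0 := by
      rw [hd 0 0 (by simp [zero_pow hppr.ne_zero]), map_zero]
    show Tch (π 0) + Vsh (d 0) = 0
    rw [map_zero, h1, Tch_zero, Vsh_zero, add_zero]
  have hΛmul : ∀ x x', Λf (x * x') = Λf x * Λf x' := by
    intro x x'
    obtain ⟨y, hy1⟩ := hy x
    obtain ⟨y', hy2⟩ := hy x'
    have hmix : φ (x * x') - (x * x') ^ p = (p : Alift) * (y * φ x' + x ^ p * y') := by
      rw [map_mul, mul_pow]
      linear_combination φ x' * hy1 + x ^ p * hy2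
    have hdm : d (x * x') = π y * π x' ^ p + π x ^ p * π y' := by
      rw [hd _ _ hmix, map_add, map_mul, map_mul, hlift, map_pow]
    show Tch (π (x * x')) + Vsh (d (x * x'))
        = (Tch (π x) + Vsh (d x)) * (Tch (π x') + Vsh (d x'))
    rw [hd _ _ hy1, hd _ _ hy2, hdm, map_mul, mul_add, add_mul, add_mul, Tch_mul,
      Vsh_mul_Vsh, Vsh_mul_Tch, mul_comm (Tch (π x)) (Vsh (π y')), Vsh_mul_Tch, add_zero,
      add_assoc, Vsh_add]
    rw [show π y * π x' ^ p + π y' * π x ^ p = π y * π x' ^ p + π x ^ p * π y' from by ring]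
  have hΛadd : ∀ x x', Λf (x + x') = Λf x + Λf x' := by
    intro x x'
    obtain ⟨y, hy1⟩ := hy x
    obtain ⟨y', hy2⟩ := hy x'
    set c : Alift := ∑ i ∈ Finset.Ioo 0 p, x ^ i * x' ^ (p - i) * (p.choose i / p : ℕ) with hc
    have hmix : φ (x + x') - (x + x') ^ p = (p : Alift) * (y + y' - c) := by
      rw [map_add, add_pow_prime_eq' hppr x x']
      linear_combination hy1 + hy2
    have hdm : d (x + x') = π y + π y' - π c := by
      rw [hd _ _ hmix, map_sub, map_add]
    have hπc : π c = ∑ i ∈ Finset.Ioo 0 p, π x ^ i * π x' ^ (p - i) * (p.choose i / p : ℕ) := by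
      rw [hc, map_sum]
      refine Finset.sum_congr rfl fun i _ => ?_
      rw [map_mul, map_mul, map_pow, map_pow, map_natCast]
    show Tch (π (x + x')) + Vsh (d (x + x'))
        = (Tch (π x) + Vsh (d x)) + (Tch (π x') + Vsh (d x'))
    rw [hd _ _ hy1, hd _ _ hy2, hdm, map_add]
    rw [show (Tch (π x) + Vsh (π y)) + (Tch (π x') + Vsh (π y'))
        = (Tch (π x) + Tch (π x')) + (Vsh (π y) + Vsh (π y')) from by ring]
    rw [Tch_add, Vsh_add, add_assoc, Vsh_add, hπc]
    rw [show -(∑ i ∈ Finset.Ioo 0 p, π x ^ i * π x' ^ (p - i) * (p.choose i / p : ℕ))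
          + (π y + π y')
        = π y + π y' - ∑ i ∈ Finset.Ioo 0 p, π x ^ i * π x' ^ (p - i) * (p.choose i / p : ℕ)
        from by ring]
  set Λ : Alift →+* TruncatedWittVector p 2 A :=
    { toFun := Λf, map_one' := hΛone, map_mul' := hΛmul,
      map_zero' := hΛzero, map_add' := fun x x' => hΛadd x x' } with hΛ
  set I : Ideal (TruncatedWittVector p 2 A) :=
    Ideal.span {(p : TruncatedWittVector p 2 A)} with hI
  set s0 : Alift →+* TruncatedWittVector p 2 A ⧸ I := (Ideal.Quotient.mk I).comp Λ with hs0
  have hker0 : ∀ a ∈ RingHom.ker π, s0 a = 0 := by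
    intro a ha
    rw [hker, Ideal.mem_span_singleton] at ha
    obtain ⟨t, rfl⟩ := ha
    have hdpt : d ((p : Alift) * t) = π (φ t) := by
      apply hd
      have hppow : ((p : Alift) * t) ^ p = 0 := by
        rw [mul_pow]
        have hpp : (p : Alift) ^ p = 0 := by
          have h2 : (2 : ℕ) ≤ p := hppr.two_le
          have : (p : Alift) ^ p = (p : Alift) ^ 2 * (p : Alift) ^ (p - 2) := by
            rw [← pow_add]; congr 1; omega
          rw [this, sq, hp2, zero_mul]
        rw [hpp, zero_mul]
      rw [hppow, map_mul, map_natCast φ, sub_zero]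
    show Ideal.Quotient.mk I (Tch (π ((p : Alift) * t)) + Vsh (d ((p : Alift) * t))) = 0
    rw [map_mul, hπp, zero_mul, Tch_zero, zero_add, hdpt, hlift]
    rw [Ideal.Quotient.eq_zero_iff_mem]
    exact Vsh_pow_mem (π t)
  set e : Alift ⧸ RingHom.ker π ≃+* A := RingHom.quotientKerEquivOfSurjective hsurj with he
  set s : A →+* TruncatedWittVector p 2 A ⧸ I :=
    (Ideal.Quotient.lift (RingHom.ker π) s0 hker0).comp (e.symm : A →+* Alift ⧸ RingHom.ker π)
    with hs
  have hkey : ∀ x : Alift, s (π x) = s0 x := by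
    intro x
    have h1 : e (Ideal.Quotient.mk (RingHom.ker π) x) = π x := rfl
    have h2 : e.symm (π x) = Ideal.Quotient.mk (RingHom.ker π) x := by
      rw [← h1, RingEquiv.symm_apply_apply]
    show (Ideal.Quotient.lift (RingHom.ker π) s0 hker0) (e.symm (π x)) = s0 x
    rw [h2, Ideal.Quotient.lift_mk]
  refine ⟨s, ?_, ?_⟩
  · intro a w hw
    obtain ⟨x, rfl⟩ := hsurj a
    rw [hkey] at hw
    have hw' : Ideal.Quotient.mk I (Λf x) = Ideal.Quotient.mk I w := hw
    have hmem : Λf x - w ∈ I := Ideal.Quotient.eq.mp hw'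
    obtain ⟨cc, hcc⟩ := mem_span_p hmem
    have hwx : w = Tch (π x) + Vsh (d x - cc ^ p) := by
      have h3 : w = Λf x - Vsh (cc ^ p) := by rw [← hcc]; ring
      rw [h3]
      show Tch (π x) + Vsh (d x) - Vsh (cc ^ p) = _
      rw [add_sub_assoc, Vsh_sub]
    rw [hwx, mkEq, TruncatedWittVector.coeff_mk]
    simp
  · intro x y h
    rw [hkey]
    show Ideal.Quotient.mk I (Tch (π x) + Vsh (d x)) = _
    rw [hd _ _ h, mkEq]
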